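/- Let R be a Lie conformal algebra, ρ: R → gc(V) a representation, and T: V → R a C[∂]-module homomorphism. Then u *_λ v := ρ(T(u))_λ v defines a left-symmetric conformal algebra structure on V if and only if for all u, v ∈ V, the element [T(u)_λ T(v)] - T(ρ(T(u))_λ v - ρ(T(v))_{-λ-∂} u) lies in ker(ρ)[λ]. -/

import Mathlib

open Finsupp

noncomputable section

/-- Coefficient of `λ^k` of the substitution `μ ↦ -λ-∂` applied to the polynomial
`Σₙ μ^n • (f n)` with coefficients in `A` (with `∂` acting on the coefficients). -/
def csubst {A : Type} [AddCommGroup A] [Module ℂ A]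
    (D : Module.End ℂ A) (f : ℕ →₀ A) (k : ℕ) : A :=
  f.sum fun n c => ((-1 : ℂ) ^ n * (n.choose k : ℂ)) • (D ^ (n - k)) c

/-- Coefficient of `λ^n μ^m` of `(a_λ b)_{λ+μ} c`, for a λ-product `m₁` on `A`
and a λ-action `m₂` of `A` on `V`. -/
def comp2 {A V : Type} [AddCommGroup A] [Module ℂ A] [AddCommGroup V] [Module ℂ V]
    (m₁ : A →ₗ[ℂ] A →ₗ[ℂ] (ℕ →₀ A)) (m₂ : A →ₗ[ℂ] V →ₗ[ℂ] (ℕ →₀ V))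
    (a b : A) (c : V) (n m : ℕ) : V :=
  ∑ i ∈ Finset.range (n + 1),
    (((m + n - i).choose (n - i) : ℕ) : ℂ) • m₂ (m₁ a b i) c (m + n - i)

/-- A conformal algebra: a `ℂ[∂]`-module with a sesquilinear λ-product,
encoded coefficientwise: `mul a b n` is the coefficient of `λ^n` in `a_λ b`. -/
structure ConfAlg (A : Type) [AddCommGroup A] [Module ℂ A] where
  D : Module.End ℂ A
  mul : A →ₗ[ℂ] A →ₗ[ℂ] (ℕ →₀ A)
  sesq_left_zero : ∀ a b, mul (D a) b 0 = 0
  sesq_left : ∀ a b n, mul (D a) b (n + 1) = - mul a b n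
  sesq_right_zero : ∀ a b, mul a (D b) 0 = D (mul a b 0)
  sesq_right : ∀ a b n, mul a (D b) (n + 1) = D (mul a b (n + 1)) + mul a b n

/-- A Lie conformal algebra: skew-symmetry `[a_λ b] = -[b_{-λ-∂} a]` and the
Jacobi identity `[a_λ[b_μ c]] = [[a_λ b]_{λ+μ} c] + [b_μ[a_λ c]]`, coefficientwise. -/
structure LieConfAlg (A : Type) [AddCommGroup A] [Module ℂ A] extends ConfAlg A where
  skew : ∀ a b k, mul a b k = - csubst D (mul b a) k
  jacobi : ∀ a b c n m,
    mul a (mul b c m) n = comp2 mul mul a b c n m + mul b (mul a c n) m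

/-- A left-symmetric conformal algebra:
`(a_λ b)_{λ+μ} c - a_λ(b_μ c) = (b_μ a)_{λ+μ} c - b_μ(a_λ c)`, coefficientwise. -/
structure LSConfAlg (A : Type) [AddCommGroup A] [Module ℂ A] extends ConfAlg A where
  lsym : ∀ a b c n m,
    comp2 mul mul a b c n m - mul a (mul b c m) n
      = comp2 mul mul b a c m n - mul b (mul a c n) m

/-- A representation of a Lie conformal algebra `L` on a `ℂ[∂]`-module `V`. -/
structure ConfRep {A : Type} [AddCommGroup A] [Module ℂ A]
    (L : LieConfAlg A) (V : Type) [AddCommGroup V] [Module ℂ V] where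
  DV : Module.End ℂ V
  act : A →ₗ[ℂ] V →ₗ[ℂ] (ℕ →₀ V)
  sesq_left_zero : ∀ a v, act (L.D a) v 0 = 0
  sesq_left : ∀ a v n, act (L.D a) v (n + 1) = - act a v n
  sesq_right_zero : ∀ a v, act a (DV v) 0 = DV (act a v 0)
  sesq_right : ∀ a v n, act a (DV v) (n + 1) = DV (act a v (n + 1)) + act a v n
  rep : ∀ a b v n m,
    comp2 L.mul act a b v n m = act a (act b v m) n - act b (act a v n) m

/-- `T : V → R` is an `𝒪`-operator associated with the representation `ρ`:
it is a `ℂ[∂]`-module map and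
`[T(u)_λ T(v)] = T(ρ(T u)_λ v - ρ(T v)_{-λ-∂} u)`, coefficientwise. -/
def IsOOperator {A V : Type} [AddCommGroup A] [Module ℂ A] [AddCommGroup V] [Module ℂ V]
    {L : LieConfAlg A} (ρ : ConfRep L V) (T : V →ₗ[ℂ] A) : Prop :=
  (∀ v, T (ρ.DV v) = L.D (T v)) ∧
  ∀ u v k, L.mul (T u) (T v) k = T (ρ.act (T u) v k - csubst ρ.DV (ρ.act (T v) u) k)

variable {A V : Type} [AddCommGroup A] [Module ℂ A] [AddCommGroup V] [Module ℂ V]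

lemma act_pow {L : LieConfAlg A} (ρ : ConfRep L V) (p : ℕ) (a : A) (w : V) (k : ℕ) :
    ρ.act ((L.D ^ p) a) w k = if p ≤ k then ((-1:ℂ)^p) • ρ.act a w (k - p) else 0 := by
  induction p generalizing k with
  | zero => simp
  | succ p ih =>
    have hD : (L.D ^ (p+1)) a = L.D ((L.D ^ p) a) := by rw [pow_succ']; rfl
    rw [hD]
    match k with
    | 0 => simp [ρ.sesq_left_zero]
    | (k+1) =>
      rw [ρ.sesq_left, ih]
      by_cases h : p ≤ k
      · rw [if_pos h, if_pos (by omega : p + 1 ≤ k + 1)]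
        have h2 : k + 1 - (p+1) = k - p := by omega
        rw [h2, pow_succ]
        rw [mul_smul]
        simp
      · rw [if_neg h, if_neg (by omega : ¬ p + 1 ≤ k + 1), neg_zero]

lemma csubst_add (D : Module.End ℂ A) (f g : ℕ →₀ A) (k : ℕ) :
    csubst D (f + g) k = csubst D f k + csubst D g k := by
  unfold csubst
  rw [Finsupp.sum_add_index' (by intro n; simp) (by intro n c d; rw [map_add, smul_add])]

lemma csubst_single (D : Module.End ℂ A) (j : ℕ) (a : A) (k : ℕ) :
    csubst D (Finsupp.single j a) k = ((-1:ℂ)^j * (j.choose k)) • (D ^ (j-k)) a := by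
  unfold csubst
  rw [Finsupp.sum_single_index (by simp)]

lemma binom_id' (j : ℕ) : ∀ n M : ℕ, n ≤ M → j ≤ M →
    (∑ i ∈ Finset.range (n+1), (-1:ℤ)^i * (j.choose i) * ((M-i).choose (n-i)))
      = ((M-j).choose n) := by
  induction j with
  | zero =>
      intro n M hn _
      rw [Finset.sum_eq_single 0]
      · simp
      · intro i _ hi
        have : (0:ℕ) < i := Nat.pos_of_ne_zero hi
        simp [Nat.choose_eq_zero_of_lt this]
      · simp
  | succ j ih =>
      intro n M hn hj
      match n, hn with
      | 0, _ => simp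
      | (n+1), hn =>
        have hj0 : j ≤ M := by omega
        have hj' : j ≤ M - 1 := by omega
        have hn' : n ≤ M - 1 := by omega
        have e1 := ih (n+1) M (by omega) hj0
        have e2 := ih n (M-1) hn' hj'
        rw [Finset.sum_range_succ']
        have hterm : ∀ i, (-1:ℤ)^(i+1) * ((j+1).choose (i+1)) * ((M-(i+1)).choose (n+1-(i+1)))
            = -((-1:ℤ)^i * (j.choose i) * (((M-1)-i).choose (n-i)))
              + (-1:ℤ)^(i+1) * (j.choose (i+1)) * ((M-(i+1)).choose ((n+1)-(i+1))) := by
          intro i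
          have h1 : (j+1).choose (i+1) = j.choose i + j.choose (i+1) := Nat.choose_succ_succ j i
          have h2 : M - (i+1) = (M-1) - i := by omega
          have h3 : n + 1 - (i+1) = n - i := by omega
          rw [h1, h2, h3]
          push_cast
          ring
        rw [Finset.sum_congr rfl (fun i _ => hterm i), Finset.sum_add_distrib]
        have eA : (∑ i ∈ Finset.range (n+1),
            -((-1:ℤ)^i * (j.choose i) * (((M-1)-i).choose (n-i)))) = -(((M-1)-j).choose n : ℤ) := by
          rw [Finset.sum_neg_distrib, e2]
        have eB : (∑ i ∈ Finset.range (n+1),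
            (-1:ℤ)^(i+1) * (j.choose (i+1)) * ((M-(i+1)).choose ((n+1)-(i+1))))
            = ((M-j).choose (n+1) : ℤ) - (M.choose (n+1) : ℤ) := by
          have := Finset.sum_range_succ' (fun i => (-1:ℤ)^i * (j.choose i) * ((M-i).choose ((n+1)-i))) (n+1)
          rw [e1] at this
          simp only [pow_zero, one_mul, Nat.choose_zero_right, Nat.cast_one, Nat.sub_zero] at this
          omega
        rw [eA, eB]
        have hp : (M-j).choose (n+1) = ((M-1)-j).choose n + ((M-1)-j).choose (n+1) := by
          have : M - j = ((M-1)-j) + 1 := by omega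
          rw [this, Nat.choose_succ_succ]
        have hq : M - (j+1) = (M-1) - j := by omega
        rw [hq]
        simp only [pow_zero, one_mul, Nat.choose_zero_right, Nat.cast_one, Nat.sub_zero, hp]
        push_cast
        ring

lemma key_sum {L : LieConfAlg A} (ρ : ConfRep L V) (g : ℕ →₀ A) (w : V) (n m : ℕ) :
    ∑ i ∈ Finset.range (n+1), (((m+n-i).choose (n-i) : ℕ) : ℂ) • ρ.act (csubst L.D g i) w (m+n-i)
    = ∑ i ∈ Finset.range (m+1), (((n+m-i).choose (m-i) : ℕ) : ℂ) • ρ.act (g i) w (n+m-i) := by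
  induction g using Finsupp.induction_linear with
  | zero => simp [csubst]
  | add f g hf hg =>
      simp only [csubst_add, map_add, LinearMap.add_apply, Finsupp.add_apply, smul_add,
        Finset.sum_add_distrib, hf, hg]
  | single j a =>
      rcases le_or_gt j (m+n) with hj | hj
      · have lhs_term : ∀ i ∈ Finset.range (n+1),
            (((m+n-i).choose (n-i) : ℕ) : ℂ) • ρ.act (csubst L.D (Finsupp.single j a) i) w (m+n-i)
            = ((-1:ℂ)^i * (j.choose i) * ((m+n-i).choose (n-i))) • ρ.act a w (m+n-j) := by
          intro i hi
          have hi' : i ≤ n := by simpa using Nat.lt_succ_iff.mp (Finset.mem_range.mp hi)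
          rw [csubst_single, map_smul, LinearMap.smul_apply, Finsupp.smul_apply, act_pow]
          by_cases hij : i ≤ j
          · have h1 : j - i ≤ m+n-i := by omega
            have h2 : m+n-i - (j-i) = m+n-j := by omega
            rw [if_pos h1, h2, smul_smul, smul_smul]
            congr 1
            have hsgn : (-1:ℂ)^j * (-1:ℂ)^(j-i) = (-1:ℂ)^i := by
              rw [← pow_add]
              have h3 : j + (j - i) = i + 2*(j-i) := by omega
              rw [h3, pow_add, pow_mul]
              simp
            calc (((m+n-i).choose (n-i) : ℕ) : ℂ) * ((-1:ℂ)^j * (j.choose i)) * (-1:ℂ)^(j-i)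
                = ((-1:ℂ)^j * (-1:ℂ)^(j-i)) * (j.choose i) * ((m+n-i).choose (n-i)) := by ring
              _ = (-1:ℂ)^i * (j.choose i) * ((m+n-i).choose (n-i)) := by rw [hsgn]
          · have hC : j.choose i = 0 := Nat.choose_eq_zero_of_lt (by omega)
            simp [hC]
        rw [Finset.sum_congr rfl lhs_term, ← Finset.sum_smul]
        have h := binom_id' j n (m+n) (by omega) hj
        have hco : (∑ i ∈ Finset.range (n+1), (-1:ℂ)^i * (j.choose i) * ((m+n-i).choose (n-i)))
            = (((m+n-j).choose n : ℕ) : ℂ) := by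
          have h2 : ((∑ i ∈ Finset.range (n+1),
              (-1:ℤ)^i * (j.choose i) * ((m+n-i).choose (n-i)) : ℤ) : ℂ)
              = (((m+n-j).choose n : ℕ) : ℂ) := by exact_mod_cast congrArg (fun z : ℤ => (z : ℂ)) h
          push_cast at h2
          exact_mod_cast h2
        rw [hco]
        rcases le_or_gt j m with hjm | hjm
        · rw [Finset.sum_eq_single j]
          · rw [Finsupp.single_eq_same]
            have e1 : n + m - j = m + n - j := by omega
            have e2 : m - j = (m + n - j) - n := by omega
            have e3 : (m+n-j).choose ((m+n-j) - n) = (m+n-j).choose n :=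
              Nat.choose_symm (by omega)
            rw [e1, e2, e3]
          · intro i _ hij
            rw [Finsupp.single_eq_of_ne hij]
            simp
          · intro hjn
            exact absurd (Finset.mem_range.mpr (by omega)) hjn
        · have hz : (m+n-j).choose n = 0 := Nat.choose_eq_zero_of_lt (by omega)
          rw [hz, Finset.sum_eq_zero]
          · simp
          · intro i hi
            have : i ≠ j := by
              have := Finset.mem_range.mp hi; omega
            rw [Finsupp.single_eq_of_ne this]
            simp
      · rw [Finset.sum_eq_zero, Finset.sum_eq_zero]
        · intro i hi
          have : i ≠ j := by have := Finset.mem_range.mp hi; omega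
          rw [Finsupp.single_eq_of_ne this]
          simp
        · intro i hi
          have hi' : i ≤ n := Nat.lt_succ_iff.mp (Finset.mem_range.mp hi)
          rw [csubst_single, map_smul, LinearMap.smul_apply, Finsupp.smul_apply, act_pow,
            if_neg (by omega : ¬ j - i ≤ m + n - i)]
          simp

lemma hTD_pow {L : LieConfAlg A} (ρ : ConfRep L V) (T : V →ₗ[ℂ] A)
    (hTD : ∀ v, T (ρ.DV v) = L.D (T v)) (p : ℕ) (v : V) :
    T ((ρ.DV ^ p) v) = (L.D ^ p) (T v) := by
  induction p generalizing v with
  | zero => rfl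
  | succ p ih =>
    have h1 : (ρ.DV ^ (p+1)) v = (ρ.DV ^ p) (ρ.DV v) := by rw [pow_succ]; rfl
    have h2 : (L.D ^ (p+1)) (T v) = (L.D ^ p) (L.D (T v)) := by rw [pow_succ]; rfl
    rw [h1, h2, ih, hTD]

lemma csubst_map {L : LieConfAlg A} (ρ : ConfRep L V) (T : V →ₗ[ℂ] A)
    (hTD : ∀ v, T (ρ.DV v) = L.D (T v)) (f : ℕ →₀ V) (k : ℕ) :
    csubst L.D (f.mapRange T (map_zero T)) k = T (csubst ρ.DV f k) := by
  unfold csubst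
  rw [Finsupp.sum_mapRange_index (by intro n; simp), map_finsuppSum]
  apply Finsupp.sum_congr
  intro n _
  rw [map_smul, hTD_pow ρ T hTD]

set_option maxHeartbeats 1000000 in
lemma central {L : LieConfAlg A} (ρ : ConfRep L V) (T : V →ₗ[ℂ] A)
    (hTD : ∀ v, T (ρ.DV v) = L.D (T v)) (u v w : V) (n m : ℕ) :
    (comp2 (ρ.act ∘ₗ T) (ρ.act ∘ₗ T) u v w n m - ρ.act (T u) (ρ.act (T v) w m) n)
      - (comp2 (ρ.act ∘ₗ T) (ρ.act ∘ₗ T) v u w m n - ρ.act (T v) (ρ.act (T u) w n) m)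
    = - ∑ i ∈ Finset.range (n+1), (((m+n-i).choose (n-i) : ℕ) : ℂ) •
        ρ.act (L.mul (T u) (T v) i
          - T (ρ.act (T u) v i - csubst ρ.DV (ρ.act (T v) u) i)) w (m+n-i) := by
  have h1 : comp2 (ρ.act ∘ₗ T) (ρ.act ∘ₗ T) u v w n m
      = ∑ i ∈ Finset.range (n+1), (((m+n-i).choose (n-i) : ℕ) : ℂ) •
          ρ.act (T (ρ.act (T u) v i)) w (m+n-i) := by
    simp [comp2, LinearMap.comp_apply]
  have h2 : comp2 (ρ.act ∘ₗ T) (ρ.act ∘ₗ T) v u w m n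
      = ∑ i ∈ Finset.range (n+1), (((m+n-i).choose (n-i) : ℕ) : ℂ) •
          ρ.act (T (csubst ρ.DV (ρ.act (T v) u) i)) w (m+n-i) := by
    have hkey := key_sum ρ ((ρ.act (T v) u).mapRange T (map_zero T)) w n m
    simp only [csubst_map ρ T hTD, Finsupp.mapRange_apply] at hkey
    have e : comp2 (ρ.act ∘ₗ T) (ρ.act ∘ₗ T) v u w m n
        = ∑ i ∈ Finset.range (m+1), (((n+m-i).choose (m-i) : ℕ) : ℂ) •
            ρ.act (T (ρ.act (T v) u i)) w (n+m-i) := by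
      simp [comp2, LinearMap.comp_apply]
    rw [e]
    exact hkey.symm
  have h3 : ρ.act (T u) (ρ.act (T v) w m) n - ρ.act (T v) (ρ.act (T u) w n) m
      = ∑ i ∈ Finset.range (n+1), (((m+n-i).choose (n-i) : ℕ) : ℂ) •
          ρ.act (L.mul (T u) (T v) i) w (m+n-i) := by
    rw [← ρ.rep (T u) (T v) w n m]
    simp [comp2]
  rw [sub_sub_sub_comm, h1, h2, h3, ← Finset.sum_sub_distrib, ← Finset.sum_sub_distrib, ← Finset.sum_neg_distrib]
  apply Finset.sum_congr rfl
  intro i _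
  simp only [map_sub, LinearMap.sub_apply, Finsupp.sub_apply, smul_sub, neg_sub]

lemma triangular (Y : ℕ → ℕ → V)
    (h : ∀ n m, ∑ i ∈ Finset.range (n+1), (((m+n-i).choose (n-i) : ℕ) : ℂ) • Y i (m+n-i) = 0) :
    ∀ k m, Y k m = 0 := by
  intro k
  induction k using Nat.strong_induction_on with
  | _ k ih =>
    intro m
    have hk := h k m
    rw [Finset.sum_range_succ, Finset.sum_eq_zero (fun i hi => by
      rw [ih i (Finset.mem_range.mp hi)]; simp), zero_add] at hk
    simpa using hk


/-- `u *_λ v := ρ(T u)_λ v` is left-symmetric conformal iff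
`[T(u)_λ T(v)] - T(ρ(T u)_λ v - ρ(T v)_{-λ-∂} u)` has all coefficients in `ker ρ`. -/
theorem left_symmetric_iff_ker {A V : Type}
    [AddCommGroup A] [Module ℂ A] [AddCommGroup V] [Module ℂ V]
    (L : LieConfAlg A) (ρ : ConfRep L V) (T : V →ₗ[ℂ] A)
    (hTD : ∀ v, T (ρ.DV v) = L.D (T v)) :
    (∃ S : LSConfAlg V, S.D = ρ.DV ∧ ∀ u v n, S.mul u v n = ρ.act (T u) v n)
    ↔ ∀ u v k w m,
        ρ.act (L.mul (T u) (T v) k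
          - T (ρ.act (T u) v k - csubst ρ.DV (ρ.act (T v) u) k)) w m = 0 := by
  constructor
  · rintro ⟨S, hSD, hSmul⟩ u v k w m
    have hmul : ∀ x y : V, S.mul x y = ρ.act (T x) y :=
      fun x y => Finsupp.ext fun n => hSmul x y n
    have hc : ∀ (a b : V) (c : V) (n' m' : ℕ),
        comp2 S.mul S.mul a b c n' m' = comp2 (ρ.act ∘ₗ T) (ρ.act ∘ₗ T) a b c n' m' := by
      intro a b c n' m'
      unfold comp2
      apply Finset.sum_congr rfl
      intro i _
      simp only [hmul, LinearMap.comp_apply]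
    have hzero : ∀ n' m', ∑ i ∈ Finset.range (n'+1), (((m'+n'-i).choose (n'-i) : ℕ) : ℂ) •
        ρ.act (L.mul (T u) (T v) i
          - T (ρ.act (T u) v i - csubst ρ.DV (ρ.act (T v) u) i)) w (m'+n'-i) = 0 := by
      intro n' m'
      have hls := S.lsym u v w n' m'
      rw [hc, hc] at hls
      simp only [hmul] at hls
      have hcen := central ρ T hTD u v w n' m'
      rw [hls, sub_self] at hcen
      exact neg_eq_zero.mp hcen.symm
    exact triangular (fun i m' => ρ.act (L.mul (T u) (T v) i
      - T (ρ.act (T u) v i - csubst ρ.DV (ρ.act (T v) u) i)) w m') hzero k m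
  · intro h
    refine ⟨⟨⟨ρ.DV, ρ.act ∘ₗ T, ?_, ?_, ?_, ?_⟩, ?_⟩, rfl, fun u v n => rfl⟩
    · intro a b
      simp only [LinearMap.comp_apply, hTD]
      exact ρ.sesq_left_zero (T a) b
    · intro a b n
      simp only [LinearMap.comp_apply, hTD]
      exact ρ.sesq_left (T a) b n
    · intro a b
      exact ρ.sesq_right_zero (T a) b
    · intro a b n
      exact ρ.sesq_right (T a) b n
    · intro a b c n m
      show comp2 (ρ.act ∘ₗ T) (ρ.act ∘ₗ T) a b c n m - ρ.act (T a) (ρ.act (T b) c m) n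
          = comp2 (ρ.act ∘ₗ T) (ρ.act ∘ₗ T) b a c m n - ρ.act (T b) (ρ.act (T a) c n) m
      have hcen := central ρ T hTD a b c n m
      rw [Finset.sum_eq_zero (fun i _ => by rw [h a b i c (m+n-i)]; simp), neg_zero] at hcen
      exact sub_eq_zero.mp hcen
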